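/- Let Φ: M_{2^n} → M_{2^n} be the channel Φ(ρ) = p_0 ρ + p_1 X_n ρ X_n + p_2 Y_n ρ Y_n + p_3 Z_n ρ Z_n with p_i > 0 summing to 1, and n = 3. With R the 8×8 permutation-type unitary defined by R = |000⟩⟨000| + |011⟩⟨001| + |110⟩⟨010| + |101⟩⟨011| + |111⟩⟨100| + |100⟩⟨101| + |001⟩⟨110| + |010⟩⟨111|, one has R† Φ(R(|0⟩⟨0| ⊗ ρ)R†) R = ρ_a ⊗ ρ for all density matrices ρ ∈ M_4, where ρ_a = (p_0+p_3)|0⟩⟨0| + (p_1+p_2)|1⟩⟨1|. -/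

import Mathlib

open Matrix Kronecker Complex
open scoped ComplexOrder

noncomputable def sigmaX : Matrix (Fin 2) (Fin 2) ℂ := !![0, 1; 1, 0]
noncomputable def sigmaY : Matrix (Fin 2) (Fin 2) ℂ := !![0, -Complex.I; Complex.I, 0]
noncomputable def sigmaZ : Matrix (Fin 2) (Fin 2) ℂ := !![1, 0; 0, -1]
abbrev Q3 := Fin 2 × Fin 2 × Fin 2
noncomputable def X3 : Matrix Q3 Q3 ℂ := sigmaX ⊗ₖ (sigmaX ⊗ₖ sigmaX)
noncomputable def Y3 : Matrix Q3 Q3 ℂ := sigmaY ⊗ₖ (sigmaY ⊗ₖ sigmaY)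
noncomputable def Z3 : Matrix Q3 Q3 ℂ := sigmaZ ⊗ₖ (sigmaZ ⊗ₖ sigmaZ)
noncomputable def ketbra (a b c d e f : Fin 2) : Matrix Q3 Q3 ℂ :=
  Matrix.single (a, b, c) (d, e, f) 1
noncomputable def Renc : Matrix Q3 Q3 ℂ :=
  ketbra 0 0 0 0 0 0 + ketbra 0 1 1 0 0 1 + ketbra 1 1 0 0 1 0 + ketbra 1 0 1 0 1 1 +
  ketbra 1 1 1 1 0 0 + ketbra 1 0 0 1 0 1 + ketbra 0 0 1 1 1 0 + ketbra 0 1 0 1 1 1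


/-- The fully correlated noise channel for `n = 3`. -/
noncomputable def Phi (p0 p1 p2 p3 : ℝ) (rho : Matrix Q3 Q3 ℂ) : Matrix Q3 Q3 ℂ :=
  (p0 : ℂ) • rho + (p1 : ℂ) • (X3 * rho * X3) + (p2 : ℂ) • (Y3 * rho * Y3) +
    (p3 : ℂ) • (Z3 * rho * Z3)

set_option maxHeartbeats 1000000 in
lemma hRR : Rencᴴ * Renc = 1 := by
  ext ⟨a, b, c⟩ ⟨d, e, f⟩
  simp only [Renc, ketbra, Matrix.mul_apply, Fintype.sum_prod_type, Fin.sum_univ_two,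
    Matrix.add_apply, Matrix.conjTranspose_apply, Matrix.single, Matrix.of_apply,
    Prod.mk.injEq, Matrix.one_apply]
  fin_cases a <;> fin_cases b <;> fin_cases c <;> fin_cases d <;> fin_cases e <;> fin_cases f <;>
    norm_num

set_option maxHeartbeats 1000000 in
lemma hXRenc : X3 * Renc =
    ketbra 1 1 1 0 0 0 + ketbra 1 0 0 0 0 1 + ketbra 0 0 1 0 1 0 + ketbra 0 1 0 0 1 1 +
    ketbra 0 0 0 1 0 0 + ketbra 0 1 1 1 0 1 + ketbra 1 1 0 1 1 0 + ketbra 1 0 1 1 1 1 := by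
  ext ⟨a, b, c⟩ ⟨d, e, f⟩
  simp only [Renc, ketbra, X3, sigmaX, Matrix.mul_apply, Fintype.sum_prod_type, Fin.sum_univ_two,
    Matrix.add_apply, Matrix.single, Matrix.of_apply, Matrix.kroneckerMap_apply,
    Prod.mk.injEq, Matrix.cons_val', Matrix.cons_val_zero, Matrix.cons_val_one, Matrix.head_cons,
    Matrix.empty_val', Matrix.cons_val_fin_one, Matrix.head_fin_const]
  fin_cases a <;> fin_cases b <;> fin_cases c <;> fin_cases d <;> fin_cases e <;> fin_cases f <;>
    norm_num

set_option maxHeartbeats 1000000 in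
lemma hXR : Rencᴴ * X3 * Renc = sigmaX ⊗ₖ (1 : Matrix (Fin 2 × Fin 2) (Fin 2 × Fin 2) ℂ) := by
  rw [mul_assoc, hXRenc]
  ext ⟨a, b, c⟩ ⟨d, e, f⟩
  simp only [Renc, ketbra, sigmaX, Matrix.mul_apply, Fintype.sum_prod_type, Fin.sum_univ_two,
    Matrix.add_apply, Matrix.conjTranspose_apply, Matrix.single, Matrix.of_apply,
    Matrix.kroneckerMap_apply, Prod.mk.injEq, Matrix.one_apply, Matrix.cons_val',
    Matrix.cons_val_zero, Matrix.cons_val_one, Matrix.head_cons,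
    Matrix.empty_val', Matrix.cons_val_fin_one, Matrix.head_fin_const]
  fin_cases a <;> fin_cases b <;> fin_cases c <;> fin_cases d <;> fin_cases e <;> fin_cases f <;>
    norm_num

set_option maxHeartbeats 1000000 in
lemma hYRenc : Y3 * Renc =
    (-Complex.I) • ketbra 1 1 1 0 0 0 + (-Complex.I) • ketbra 1 0 0 0 0 1 +
    (-Complex.I) • ketbra 0 0 1 0 1 0 + (-Complex.I) • ketbra 0 1 0 0 1 1 +
    Complex.I • ketbra 0 0 0 1 0 0 + Complex.I • ketbra 0 1 1 1 0 1 +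
    Complex.I • ketbra 1 1 0 1 1 0 + Complex.I • ketbra 1 0 1 1 1 1 := by
  ext ⟨a, b, c⟩ ⟨d, e, f⟩
  simp only [Renc, ketbra, Y3, sigmaY, Matrix.mul_apply, Fintype.sum_prod_type, Fin.sum_univ_two,
    Matrix.add_apply, Matrix.smul_apply, Matrix.single, Matrix.of_apply,
    Matrix.kroneckerMap_apply, Prod.mk.injEq, smul_eq_mul, Matrix.cons_val',
    Matrix.cons_val_zero, Matrix.cons_val_one, Matrix.head_cons,
    Matrix.empty_val', Matrix.cons_val_fin_one, Matrix.head_fin_const]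
  fin_cases a <;> fin_cases b <;> fin_cases c <;> fin_cases d <;> fin_cases e <;> fin_cases f <;>
    norm_num

set_option maxHeartbeats 1000000 in
lemma hYR : Rencᴴ * Y3 * Renc = (-sigmaY) ⊗ₖ (1 : Matrix (Fin 2 × Fin 2) (Fin 2 × Fin 2) ℂ) := by
  rw [mul_assoc, hYRenc]
  ext ⟨a, b, c⟩ ⟨d, e, f⟩
  simp only [Renc, ketbra, sigmaY, Matrix.mul_apply, Fintype.sum_prod_type, Fin.sum_univ_two,
    Matrix.add_apply, Matrix.smul_apply, Matrix.conjTranspose_apply, Matrix.single,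
    Matrix.of_apply, Matrix.kroneckerMap_apply, Prod.mk.injEq, Matrix.one_apply,
    Matrix.neg_apply, smul_eq_mul, Matrix.cons_val', Matrix.cons_val_zero, Matrix.cons_val_one,
    Matrix.head_cons, Matrix.empty_val', Matrix.cons_val_fin_one, Matrix.head_fin_const]
  fin_cases a <;> fin_cases b <;> fin_cases c <;> fin_cases d <;> fin_cases e <;> fin_cases f <;>
    norm_num

set_option maxHeartbeats 1000000 in
lemma hZRenc : Z3 * Renc =
    ketbra 0 0 0 0 0 0 + ketbra 0 1 1 0 0 1 + ketbra 1 1 0 0 1 0 + ketbra 1 0 1 0 1 1 -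
    ketbra 1 1 1 1 0 0 - ketbra 1 0 0 1 0 1 - ketbra 0 0 1 1 1 0 - ketbra 0 1 0 1 1 1 := by
  ext ⟨a, b, c⟩ ⟨d, e, f⟩
  simp only [Renc, ketbra, Z3, sigmaZ, Matrix.mul_apply, Fintype.sum_prod_type, Fin.sum_univ_two,
    Matrix.add_apply, Matrix.sub_apply, Matrix.single, Matrix.of_apply,
    Matrix.kroneckerMap_apply, Prod.mk.injEq, Matrix.cons_val', Matrix.cons_val_zero,
    Matrix.cons_val_one, Matrix.head_cons, Matrix.empty_val', Matrix.cons_val_fin_one,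
    Matrix.head_fin_const]
  fin_cases a <;> fin_cases b <;> fin_cases c <;> fin_cases d <;> fin_cases e <;> fin_cases f <;>
    norm_num

set_option maxHeartbeats 1000000 in
lemma hZR : Rencᴴ * Z3 * Renc = sigmaZ ⊗ₖ (1 : Matrix (Fin 2 × Fin 2) (Fin 2 × Fin 2) ℂ) := by
  rw [mul_assoc, hZRenc]
  ext ⟨a, b, c⟩ ⟨d, e, f⟩
  simp only [Renc, ketbra, sigmaZ, Matrix.mul_apply, Fintype.sum_prod_type, Fin.sum_univ_two,
    Matrix.add_apply, Matrix.sub_apply, Matrix.conjTranspose_apply, Matrix.single,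
    Matrix.of_apply, Matrix.kroneckerMap_apply, Prod.mk.injEq, Matrix.one_apply,
    Matrix.cons_val', Matrix.cons_val_zero, Matrix.cons_val_one, Matrix.head_cons,
    Matrix.empty_val', Matrix.cons_val_fin_one, Matrix.head_fin_const]
  fin_cases a <;> fin_cases b <;> fin_cases c <;> fin_cases d <;> fin_cases e <;> fin_cases f <;>
    norm_num

lemma sigmaX_E00 : sigmaX * Matrix.single (0 : Fin 2) (0 : Fin 2) (1 : ℂ) * sigmaX =
    Matrix.single (1 : Fin 2) (1 : Fin 2) (1 : ℂ) := by
  ext i j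
  fin_cases i <;> fin_cases j <;>
    simp [sigmaX, Matrix.mul_apply, Fin.sum_univ_two, Matrix.single, Matrix.vecHead, Matrix.vecTail]

lemma sigmaY_E00 : (-sigmaY) * Matrix.single (0 : Fin 2) (0 : Fin 2) (1 : ℂ) * (-sigmaY) =
    Matrix.single (1 : Fin 2) (1 : Fin 2) (1 : ℂ) := by
  ext i j
  fin_cases i <;> fin_cases j <;>
    simp [sigmaY, Matrix.mul_apply, Fin.sum_univ_two, Matrix.single, Matrix.vecHead, Matrix.vecTail]

lemma sigmaZ_E00 : sigmaZ * Matrix.single (0 : Fin 2) (0 : Fin 2) (1 : ℂ) * sigmaZ =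
    Matrix.single (0 : Fin 2) (0 : Fin 2) (1 : ℂ) := by
  ext i j
  fin_cases i <;> fin_cases j <;>
    simp [sigmaZ, Matrix.mul_apply, Fin.sum_univ_two, Matrix.single, Matrix.vecHead, Matrix.vecTail]

theorem qecc_three_qubits (p0 p1 p2 p3 : ℝ)
    (h0 : 0 < p0) (h1 : 0 < p1) (h2 : 0 < p2) (h3 : 0 < p3)
    (hsum : p0 + p1 + p2 + p3 = 1)
    (rho : Matrix (Fin 2 × Fin 2) (Fin 2 × Fin 2) ℂ)
    (hpos : rho.PosSemidef) (htr : rho.trace = 1) :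
    Rencᴴ * Phi p0 p1 p2 p3
        (Renc * ((Matrix.single (0 : Fin 2) (0 : Fin 2) (1 : ℂ)) ⊗ₖ rho) * Rencᴴ)
      * Renc =
    (((p0 + p3 : ℝ) : ℂ) • Matrix.single (0 : Fin 2) (0 : Fin 2) (1 : ℂ) +
      ((p1 + p2 : ℝ) : ℂ) • Matrix.single (1 : Fin 2) (1 : Fin 2) (1 : ℂ)) ⊗ₖ rho := by
  set E0 := Matrix.single (0 : Fin 2) (0 : Fin 2) (1 : ℂ)
  set E1 := Matrix.single (1 : Fin 2) (1 : Fin 2) (1 : ℂ)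
  set M := E0 ⊗ₖ rho with hM
  have key : ∀ P : Matrix Q3 Q3 ℂ,
      Rencᴴ * (P * (Renc * M * Rencᴴ) * P) * Renc =
      (Rencᴴ * P * Renc) * M * (Rencᴴ * P * Renc) := by
    intro P; simp only [mul_assoc]
  have hid : Rencᴴ * (Renc * M * Rencᴴ) * Renc = M := by
    calc Rencᴴ * (Renc * M * Rencᴴ) * Renc
        = (Rencᴴ * Renc) * M * (Rencᴴ * Renc) := by simp only [mul_assoc]
      _ = M := by rw [hRR, one_mul, mul_one]
  have hXterm : Rencᴴ * (X3 * (Renc * M * Rencᴴ) * X3) * Renc = E1 ⊗ₖ rho := by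
    rw [key X3, hXR, hM, ← Matrix.mul_kronecker_mul, ← Matrix.mul_kronecker_mul,
      sigmaX_E00, one_mul, mul_one]
  have hYterm : Rencᴴ * (Y3 * (Renc * M * Rencᴴ) * Y3) * Renc = E1 ⊗ₖ rho := by
    rw [key Y3, hYR, hM, ← Matrix.mul_kronecker_mul, ← Matrix.mul_kronecker_mul,
      sigmaY_E00, one_mul, mul_one]
  have hZterm : Rencᴴ * (Z3 * (Renc * M * Rencᴴ) * Z3) * Renc = E0 ⊗ₖ rho := by
    rw [key Z3, hZR, hM, ← Matrix.mul_kronecker_mul, ← Matrix.mul_kronecker_mul,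
      sigmaZ_E00, one_mul, mul_one]
  have expand : Rencᴴ * Phi p0 p1 p2 p3 (Renc * M * Rencᴴ) * Renc =
      (p0 : ℂ) • (Rencᴴ * (Renc * M * Rencᴴ) * Renc) +
      (p1 : ℂ) • (Rencᴴ * (X3 * (Renc * M * Rencᴴ) * X3) * Renc) +
      (p2 : ℂ) • (Rencᴴ * (Y3 * (Renc * M * Rencᴴ) * Y3) * Renc) +
      (p3 : ℂ) • (Rencᴴ * (Z3 * (Renc * M * Rencᴴ) * Z3) * Renc) := by
    simp only [Phi, Matrix.mul_add, Matrix.add_mul, Matrix.mul_smul, Matrix.smul_mul,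
      mul_assoc]
  rw [expand, hid, hXterm, hYterm, hZterm, hM]
  rw [Matrix.add_kronecker, Matrix.smul_kronecker, Matrix.smul_kronecker]
  push_cast
  rw [add_smul, add_smul]
  abel
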